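/- Given any n0 points in F^3 and integers r ≥ 1, D, k ≥ 1 satisfying D^3 / (6k^2) > n0 · C(r+2, 3), there exists a nonzero polynomial Q(X,Y1,Y2) over F of (1,k,k)-weighted degree at most D having a zero of multiplicity r at each of the n0 points. -/

import Mathlib

open Finset

namespace Stmt7Aux

open Finset

lemma aux_card_le_six {α : Type*} [DecidableEq α] (x1 x2 x3 x4 x5 x6 : α) :
    ({x1,x2,x3,x4,x5,x6} : Finset α).card ≤ 6 := by
  repeat' refine (Finset.card_insert_le _ _).trans (Nat.succ_le_succ ?_)
  simp

lemma aux_sort_mem (x y z u v w : ℕ)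
    (h1 : min x (min y z) = u)
    (h2 : x + y + z - min x (min y z) - max x (max y z) - min x (min y z) = v)
    (h3 : max x (max y z) - (x + y + z - min x (min y z) - max x (max y z)) = w) :
    (x = u ∧ y = u+v ∧ z = u+v+w) ∨ (x = u ∧ y = u+v+w ∧ z = u+v) ∨
    (x = u+v ∧ y = u ∧ z = u+v+w) ∨ (x = u+v ∧ y = u+v+w ∧ z = u) ∨
    (x = u+v+w ∧ y = u ∧ z = u+v) ∨ (x = u+v+w ∧ y = u+v ∧ z = u) := by
  rcases le_total x y with hxy | hxy <;> rcases le_total y z with hyz | hyz <;>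
    rcases le_total x z with hxz | hxz
  · exact Or.inl ⟨by omega, by omega, by omega⟩
  · exact Or.inl ⟨by omega, by omega, by omega⟩
  · exact Or.inr (Or.inl ⟨by omega, by omega, by omega⟩)
  · exact Or.inr (Or.inr (Or.inr (Or.inl ⟨by omega, by omega, by omega⟩)))
  · exact Or.inr (Or.inr (Or.inl ⟨by omega, by omega, by omega⟩))
  · exact Or.inr (Or.inr (Or.inr (Or.inr (Or.inl ⟨by omega, by omega, by omega⟩))))
  · exact Or.inl ⟨by omega, by omega, by omega⟩
  · exact Or.inr (Or.inr (Or.inr (Or.inr (Or.inr ⟨by omega, by omega, by omega⟩))))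

lemma aux_count_big (D k m : ℕ) (hk : 1 ≤ k) (h : 6 * k ^ 2 * m < D ^ 3) :
    ∃ S : Finset (ℕ × ℕ × ℕ), m < S.card ∧
      ∀ t ∈ S, t.1 + k * t.2.1 + k * t.2.2 ≤ D := by
  classical
  let cube : Finset (ℕ × ℕ × ℕ) := range D ×ˢ range D ×ˢ range D
  let f1 : ℕ × ℕ × ℕ → ℕ × ℕ × ℕ := fun t =>
    (min t.1 (min t.2.1 t.2.2),
     t.1 + t.2.1 + t.2.2 - min t.1 (min t.2.1 t.2.2) - max t.1 (max t.2.1 t.2.2)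
       - min t.1 (min t.2.1 t.2.2),
     max t.1 (max t.2.1 t.2.2)
       - (t.1 + t.2.1 + t.2.2 - min t.1 (min t.2.1 t.2.2) - max t.1 (max t.2.1 t.2.2)))
  let T1 : Finset (ℕ × ℕ × ℕ) := cube.image f1
  let f2 : ℕ × ℕ × ℕ → ℕ × ℕ × ℕ := fun t => (t.1, t.2.1 / k, t.2.2 / k)
  refine ⟨T1.image f2, ?_, ?_⟩
  · -- cardinality
    have hcard : cube.card = D ^ 3 := by
      simp only [cube, Finset.card_product, Finset.card_range]; ring
    have h1 : cube.card ≤ 6 * T1.card := by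
      apply Finset.card_le_mul_card_image
      rintro ⟨u, v, w⟩ _
      have hsub : cube.filter (fun t => f1 t = (u, v, w)) ⊆
          ({(u, u+v, u+v+w), (u, u+v+w, u+v), (u+v, u, u+v+w),
            (u+v, u+v+w, u), (u+v+w, u, u+v), (u+v+w, u+v, u)} : Finset (ℕ×ℕ×ℕ)) := by
        rintro ⟨x, y, z⟩ ht
        simp only [Finset.mem_filter, f1, Prod.ext_iff] at ht
        obtain ⟨-, h1, h2, h3⟩ := ht
        simp only [Finset.mem_insert, Finset.mem_singleton, Prod.ext_iff]
        exact aux_sort_mem x y z u v w h1 h2 h3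
      exact (Finset.card_le_card hsub).trans (aux_card_le_six _ _ _ _ _ _)
    have h2 : T1.card ≤ k ^ 2 * (T1.image f2).card := by
      have hb : ∀ b ∈ T1.image f2, (T1.filter (fun t => f2 t = b)).card ≤ k * k := by
        rintro ⟨a, b, c⟩ _
        have hsub : T1.filter (fun t => f2 t = (a, b, c)) ⊆
            ({a} ×ˢ Finset.Ico (k*b) (k*b+k) ×ˢ Finset.Ico (k*c) (k*c+k)) := by
          rintro ⟨x, y, z⟩ ht
          simp only [Finset.mem_filter, f2, Prod.ext_iff] at ht
          obtain ⟨-, h1, h2, h3⟩ := ht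
          have e2 := Nat.div_add_mod y k
          have e3 := Nat.div_add_mod z k
          rw [h2] at e2
          rw [h3] at e3
          have m2 : y % k < k := Nat.mod_lt _ hk
          have m3 : z % k < k := Nat.mod_lt _ hk
          simp only [Finset.mem_product, Finset.mem_singleton, Finset.mem_Ico]
          omega
        refine (Finset.card_le_card hsub).trans ?_
        simp only [Finset.card_product, Finset.card_singleton, Nat.card_Ico]
        have hb' : k * b + k - k * b = k := by omega
        have hc' : k * c + k - k * c = k := by omega
        rw [hb', hc']
        omega
      have := Finset.card_le_mul_card_image (f := f2) T1 (k * k) hb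
      calc T1.card ≤ k * k * (T1.image f2).card := this
        _ = k ^ 2 * (T1.image f2).card := by ring_nf
    have hD3 : D ^ 3 ≤ 6 * k ^ 2 * (T1.image f2).card := by
      calc D ^ 3 = cube.card := hcard.symm
        _ ≤ 6 * T1.card := h1
        _ ≤ 6 * (k ^ 2 * (T1.image f2).card) := by omega
        _ = 6 * k ^ 2 * (T1.image f2).card := by ring
    by_contra hc
    push_neg at hc
    have : 6 * k ^ 2 * (T1.image f2).card ≤ 6 * k ^ 2 * m :=
      Nat.mul_le_mul_left _ hc
    omega
  · rintro ⟨a, b, c⟩ ht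
    simp only [Finset.mem_image] at ht
    obtain ⟨t1, ht1, he⟩ := ht
    simp only [T1, Finset.mem_image] at ht1
    obtain ⟨⟨x, y, z⟩, hxyz, he1⟩ := ht1
    simp only [cube, Finset.mem_product, Finset.mem_range] at hxyz
    have hsum : t1.1 + t1.2.1 + t1.2.2 ≤ D := by
      subst he1
      simp only [f1]
      omega
    have d2 : k * (t1.2.1 / k) ≤ t1.2.1 := Nat.mul_div_le _ _
    have d3 : k * (t1.2.2 / k) ≤ t1.2.2 := Nat.mul_div_le _ _
    rw [← he]
    simp only [f2]
    omega
open Finset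

lemma aux_count_low (r : ℕ) :
    ((range r ×ˢ range r ×ˢ range r).filter
      (fun t => t.1 + t.2.1 + t.2.2 < r)).card ≤ (r + 2).choose 3 := by
  classical
  have hcard : ((range (r + 2)).powersetCard 3).card = (r + 2).choose 3 := by
    rw [Finset.card_powersetCard, Finset.card_range]
  rw [← hcard]
  apply Finset.card_le_card_of_injOn
    (fun t => ({t.1, t.1 + t.2.1 + 1, t.1 + t.2.1 + t.2.2 + 2} : Finset ℕ))
  · rintro ⟨a, b, c⟩ ht
    simp only [Finset.mem_coe, Finset.mem_filter, Finset.mem_product, Finset.mem_range] at ht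
    rw [Finset.mem_coe, Finset.mem_powersetCard]
    constructor
    · intro x hx
      simp only [Finset.mem_insert, Finset.mem_singleton] at hx
      rw [Finset.mem_range]
      omega
    · rw [Finset.card_insert_of_notMem (by simp; omega),
        Finset.card_insert_of_notMem (by simp; omega), Finset.card_singleton]
  · rintro ⟨a, b, c⟩ ha ⟨a', b', c'⟩ hb h
    simp only [Finset.ext_iff, Finset.mem_insert, Finset.mem_singleton] at h
    have h1 := h a
    have h2 := h (a + b + 1)
    have h3 := h (a + b + c + 2)
    have h4 := (h a').mpr
    have h5 := (h (a' + b' + 1)).mpr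
    have h6 := (h (a' + b' + c' + 2)).mpr
    simp only [Prod.ext_iff]
    simp only [true_or, or_true, eq_self_iff_true, forall_true_left] at h1 h2 h3 h4 h5 h6
    omega


noncomputable def toF (t : ℕ × ℕ × ℕ) : Fin 3 →₀ ℕ :=
  Finsupp.equivFunOnFinite.symm ![t.1, t.2.1, t.2.2]

lemma toF_coe (t : ℕ × ℕ × ℕ) : (toF t : Fin 3 → ℕ) = ![t.1, t.2.1, t.2.2] := rfl

lemma toF_inj : Function.Injective toF := by
  intro s t h
  have h' : (toF s : Fin 3 → ℕ) = (toF t : Fin 3 → ℕ) := congrArg _ h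
  rw [toF_coe, toF_coe] at h'
  have h0 := congrFun h' 0
  have h1 := congrFun h' 1
  have h2 := congrFun h' 2
  simp only [Matrix.cons_val_zero, Matrix.cons_val_one, Matrix.head_cons,
    Matrix.cons_val_two, Matrix.tail_cons] at h0 h1 h2
  exact Prod.ext h0 (Prod.ext h1 h2)

lemma eq_toF (d : Fin 3 →₀ ℕ) : d = toF (d 0, d 1, d 2) := by
  apply Finsupp.ext
  intro i
  have : toF (d 0, d 1, d 2) i = ![d 0, d 1, d 2] i := rfl
  rw [this]
  fin_cases i <;> simp

lemma weight_toF (k : ℕ) (t : ℕ × ℕ × ℕ) :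
    (Finsupp.weight ![1, k, k]) (toF t) = t.1 + t.2.1 * k + t.2.2 * k := by
  rw [Finsupp.weight_apply, Finsupp.sum_fintype]
  · rw [Fin.sum_univ_three]
    simp [toF, smul_eq_mul]
  · intro i
    exact zero_smul _ _

lemma sum_eq (d : Fin 3 →₀ ℕ) : (d.sum fun _ e => e) = d 0 + d 1 + d 2 := by
  rw [Finsupp.sum_fintype _ _ (fun i => rfl), Fin.sum_univ_three]

variable (F : Type*) [Field F]

noncomputable def QofL (B : Finset (Fin 3 →₀ ℕ)) :
    (↥B → F) →ₗ[F] MvPolynomial (Fin 3) F where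
  toFun c := ∑ b ∈ B.attach, (MvPolynomial.monomial b.1) (c b)
  map_add' c c' := by simp [Finset.sum_add_distrib]
  map_smul' a c := by simp [Finset.smul_sum, MvPolynomial.smul_monomial]

variable {F}

lemma coeff_QofL (B : Finset (Fin 3 →₀ ℕ)) (c : ↥B → F) (b : ↥B) :
    MvPolynomial.coeff b.1 (QofL F B c) = c b := by
  classical
  show MvPolynomial.coeff b.1 (∑ b' ∈ B.attach, (MvPolynomial.monomial b'.1) (c b')) = c b
  rw [MvPolynomial.coeff_sum, Finset.sum_eq_single b]
  · rw [MvPolynomial.coeff_monomial, if_pos rfl]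
  · intro b' _ hne
    rw [MvPolynomial.coeff_monomial, if_neg (fun h => hne (Subtype.ext h))]
  · intro hb; exact absurd (Finset.mem_attach _ b) hb

lemma support_QofL (B : Finset (Fin 3 →₀ ℕ)) (c : ↥B → F) :
    (QofL F B c).support ⊆ B := by
  intro d hd
  by_contra hdB
  apply MvPolynomial.mem_support_iff.mp hd
  show MvPolynomial.coeff d (∑ b' ∈ B.attach, (MvPolynomial.monomial b'.1) (c b')) = 0
  rw [MvPolynomial.coeff_sum]
  apply Finset.sum_eq_zero
  intro b _
  rw [MvPolynomial.coeff_monomial, if_neg]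
  intro h
  exact hdB (h ▸ b.2)

end Stmt7Aux

/-- `Q` has a zero of multiplicity `r` at the point `p`: the shifted polynomial
`Q(X₁ + p₁, …)` has no monomial of total degree less than `r`. -/
def HasZeroOfMultiplicity {F : Type*} [CommRing F] {σ : Type*}
    (Q : MvPolynomial σ F) (r : ℕ) (p : σ → F) : Prop :=
  ∀ d ∈ (MvPolynomial.aeval
      (fun i => MvPolynomial.X i + MvPolynomial.C (p i)) Q).support,
    r ≤ d.sum fun _ e => e

/-- Given `n0` points in `F³` and parameters with `D³/(6k²) > n0 · C(r+2,3)`, there is a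
nonzero trivariate polynomial of `(1,k,k)`-weighted degree at most `D` with a zero of
multiplicity `r` at each point. -/
theorem stmt_7 {F : Type*} [Field F] (n0 r D k : ℕ) (hr : 1 ≤ r) (hk : 1 ≤ k)
    (p : Fin n0 → Fin 3 → F)
    (hcond : 6 * k ^ 2 * (n0 * Nat.choose (r + 2) 3) < D ^ 3) :
    ∃ Q : MvPolynomial (Fin 3) F, Q ≠ 0 ∧
      MvPolynomial.weightedTotalDegree ![1, k, k] Q ≤ D ∧
      ∀ i, HasZeroOfMultiplicity Q r (p i) := by
  classical
  open Stmt7Aux MvPolynomial in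
  obtain ⟨S, hScard, hSdeg⟩ := aux_count_big D k (n0 * Nat.choose (r + 2) 3) hk hcond
  set B : Finset (Fin 3 →₀ ℕ) := S.image toF with hB
  have hBcard : B.card = S.card := Finset.card_image_of_injective _ toF_inj
  have hBdeg : ∀ b ∈ B, (Finsupp.weight ![1, k, k]) b ≤ D := by
    intro b hb
    rw [hB, Finset.mem_image] at hb
    obtain ⟨t, ht, rfl⟩ := hb
    rw [weight_toF]
    have := hSdeg t ht
    have e1 : t.2.1 * k = k * t.2.1 := mul_comm _ _
    have e2 : t.2.2 * k = k * t.2.2 := mul_comm _ _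
    omega
  set E0 : Finset (ℕ × ℕ × ℕ) :=
    (range r ×ˢ range r ×ˢ range r).filter (fun t => t.1 + t.2.1 + t.2.2 < r) with hE0
  set E : Finset (Fin 3 →₀ ℕ) := E0.image toF with hE
  have hEcard : E.card ≤ Nat.choose (r + 2) 3 :=
    le_trans (Finset.card_image_le) (aux_count_low r)
  have hEmem : ∀ d : Fin 3 →₀ ℕ, (d.sum fun _ e => e) < r → d ∈ E := by
    intro d hd
    rw [sum_eq] at hd
    rw [hE, Finset.mem_image]
    refine ⟨(d 0, d 1, d 2), ?_, (eq_toF d).symm⟩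
    rw [hE0]
    simp only [Finset.mem_filter, Finset.mem_product, Finset.mem_range]
    omega
  -- the linear map
  set shift : Fin n0 → MvPolynomial (Fin 3) F →ₐ[F] MvPolynomial (Fin 3) F :=
    fun i => MvPolynomial.aeval (fun j => MvPolynomial.X j + MvPolynomial.C (p i j)) with hshift
  set Φ : (↥B → F) →ₗ[F] ((Fin n0 × ↥E) → F) :=
    LinearMap.pi (fun je =>
      (MvPolynomial.lcoeff F je.2.1) ∘ₗ (shift je.1).toLinearMap ∘ₗ QofL F B) with hΦ
  have hfin1 : Module.finrank F (↥B → F) = B.card := by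
    rw [Module.finrank_pi]; exact Fintype.card_coe _
  have hfin2 : Module.finrank F ((Fin n0 × ↥E) → F) = n0 * E.card := by
    rw [Module.finrank_pi, Fintype.card_prod, Fintype.card_coe, Fintype.card_fin]
  have hni : ¬ Function.Injective Φ := by
    intro hinj
    have hle := LinearMap.finrank_le_finrank_of_injective hinj
    rw [hfin1, hfin2] at hle
    have : B.card ≤ n0 * Nat.choose (r + 2) 3 :=
      hle.trans (Nat.mul_le_mul_left _ hEcard)
    omega
  obtain ⟨c1, c2, heq, hne⟩ := Function.not_injective_iff.mp hni
  set c : ↥B → F := c1 - c2 with hcdef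
  have hc0 : c ≠ 0 := sub_ne_zero.mpr hne
  have hΦc : Φ c = 0 := by rw [hcdef, map_sub, heq, sub_self]
  refine ⟨QofL F B c, ?_, ?_, ?_⟩
  · -- nonzero
    intro hQ0
    obtain ⟨b, hb⟩ := Function.ne_iff.mp hc0
    apply hb
    rw [← coeff_QofL B c b, hQ0, MvPolynomial.coeff_zero]
    rfl
  · -- degree
    have hdeg : MvPolynomial.weightedTotalDegree ![1, k, k] (QofL F B c)
        = (QofL F B c).support.sup (fun s => (Finsupp.weight ![1, k, k]) s) := rfl
    rw [hdeg]
    apply Finset.sup_le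
    intro d hd
    exact hBdeg d (support_QofL B c hd)
  · -- multiplicity
    intro i d hd
    by_contra hlt
    push_neg at hlt
    have hdE : d ∈ E := hEmem d hlt
    apply MvPolynomial.mem_support_iff.mp hd
    have := congrFun hΦc (i, ⟨d, hdE⟩)
    simpa [hΦ, hshift, MvPolynomial.lcoeff] using this
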